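/- The map (a,b,c) ↦ (bc/(a+c), a+c, ab/(a+c)) on triples of positive reals is injective. -/

import Mathlib

/-- The Lusztig transformation `T(a,b,c) = (bc/(a+c), a+c, ab/(a+c))`. -/
noncomputable def lusztigT (p : ℝ × ℝ × ℝ) : ℝ × ℝ × ℝ :=
  (p.2.1 * p.2.2 / (p.1 + p.2.2), p.1 + p.2.2, p.1 * p.2.1 / (p.1 + p.2.2))

theorem stmt_3 (a b c a' b' c' : ℝ) (ha : 0 < a) (hb : 0 < b) (hc : 0 < c)
    (ha' : 0 < a') (hb' : 0 < b') (hc' : 0 < c')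
    (h : lusztigT (a, b, c) = lusztigT (a', b', c')) :
    a = a' ∧ b = b' ∧ c = c' := by
  simp only [lusztigT, Prod.mk.injEq] at h
  obtain ⟨h1, h2, h3⟩ := h
  have hs : (0:ℝ) < a + c := by linarith
  have hs' : (0:ℝ) < a' + c' := by linarith
  have e1 : b * c = b' * c' := by
    field_simp at h1; rw [h2] at h1
    exact mul_right_cancel₀ (ne_of_gt hs') (h1.trans (by ring))
  have e3 : a * b = a' * b' := by
    field_simp at h3; rw [h2] at h3
    exact mul_right_cancel₀ (ne_of_gt hs') (h3.trans (by ring))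
  have hbb : b = b' := by
    have : b * (a + c) = b' * (a' + c') := by ring_nf; nlinarith [e1, e3]
    rw [h2] at this
    exact mul_right_cancel₀ (ne_of_gt hs') this
  have hcc : c = c' := by
    have := e1; rw [hbb] at this
    exact mul_left_cancel₀ (ne_of_gt hb') this
  exact ⟨by linarith, hbb, hcc⟩
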